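/- For every integer n ≥ 1, with N = n² + n − 1, the N-th power of the two-sided ideal of B generated by J is contained in ⟨Jⁿ⟩ + Iⁿ; that is, ⟨J⟩^(n²+n−1) ⊆ ⟨Jⁿ⟩ + Iⁿ. -/

import Mathlib

open List

section lift
variable {α β : Type*}

lemma exists_preimage_list (f : α → β) (s : Set α) :
    ∀ l : List β, (∀ y ∈ l, ∃ a ∈ s, f a = y) →
      ∃ l' : List α, (∀ a ∈ l', a ∈ s) ∧ l = l'.map f := by
  intro l
  induction l with
  | nil => intro _; exact ⟨[], by simp, by simp⟩
  | cons b l ih =>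
    intro h
    obtain ⟨a, ha, hfa⟩ := h b (List.mem_cons_self (a := b) (l := l))
    obtain ⟨l', hl', hmap⟩ := ih (fun y hy => h y (List.mem_cons_of_mem _ hy))
    refine ⟨a :: l', ?_, by simp [hfa, ← hmap]⟩
    intro c hc
    rcases List.mem_cons.1 hc with rfl | hc
    · exact ha
    · exact hl' c hc

end lift


open List Classical

section lists
variable {α : Type*}

/-- Either all elements of `l` fail `p`, or `l` splits at the first element satisfying `p`. -/
lemma split_first' (p : α → Prop) (l : List α) :
    (∀ x ∈ l, ¬ p x) ∨
      ∃ c x r, l = c ++ x :: r ∧ (∀ y ∈ c, ¬ p y) ∧ p x := by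
  induction l with
  | nil => left; simp
  | cons a l ih =>
    by_cases ha : p a
    · right; exact ⟨[], a, l, by simp, by simp, ha⟩
    · rcases ih with h | ⟨c, x, r, rfl, hc, hx⟩
      · left
        intro y hy
        rcases List.mem_cons.1 hy with rfl | hy
        · exact ha
        · exact h y hy
      · right
        exact ⟨a :: c, x, r, by simp, by
          intro y hy
          rcases List.mem_cons.1 hy with rfl | hy
          · exact ha
          · exact hc y hy, hx⟩

/-- If a list is long enough and has few `p`-elements, it contains a run of `n`
consecutive non-`p`-elements. -/
lemma run_of_low_count (p : α → Prop) [DecidablePred p] (n : ℕ) (hn : 1 ≤ n) :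
    ∀ t : ℕ, ∀ l : List α, (t + 1) * n + t ≤ l.length →
      l.countP (fun x => decide (p x)) ≤ t →
      ∃ l₁ l₂ l₃ : List α, l = l₁ ++ l₂ ++ l₃ ∧ l₂.length = n ∧ ∀ x ∈ l₂, ¬ p x := by
  intro t
  induction t with
  | zero =>
    intro l hlen hcount
    have hall : ∀ x ∈ l, ¬ p x := by
      intro x hx hpx
      have : 0 < l.countP (fun x => decide (p x)) :=
        List.countP_pos_iff.2 ⟨x, hx, by simpa using hpx⟩
      omega
    refine ⟨[], l.take n, l.drop n, by simp, ?_, fun x hx => hall x (List.take_subset _ _ hx)⟩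
    simp only [List.length_take]
    omega
  | succ t ih =>
    intro l hlen hcount
    rcases split_first' p l with hall | ⟨c, x, r, rfl, hc, hx⟩
    · refine ⟨[], l.take n, l.drop n, by simp, ?_, fun x hx => hall x (List.take_subset _ _ hx)⟩
      simp only [List.length_take]
      have : n ≤ l.length := by nlinarith
      omega
    · by_cases hcn : n ≤ c.length
      · refine ⟨[], c.take n, c.drop n ++ x :: r, by simp only [List.nil_append]; rw [← List.append_assoc, List.take_append_drop], by simp; omega,
          fun y hy => hc y (List.take_subset _ _ hy)⟩
      · have hcc : c.countP (fun x => decide (p x)) = 0 :=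
          List.countP_eq_zero.2 (fun a ha => by simpa using hc a ha)
        have hcount' : r.countP (fun x => decide (p x)) ≤ t := by
          rw [List.countP_append, List.countP_cons_of_pos] at hcount
          · omega
          · simpa using hx
        have hlen' : (t + 1) * n + t ≤ r.length := by
          simp only [List.length_append, List.length_cons] at hlen
          have h2 : (t + 1 + 1) * n = (t + 1) * n + n := by ring
          omega
        obtain ⟨l₁, l₂, l₃, hr, hl2, hl2p⟩ := ih r hlen' hcount'
        exact ⟨c ++ x :: l₁, l₂, l₃, by simp [hr], hl2, hl2p⟩

end lists

section ring
variable {B : Type*} [Ring B]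


/-- If a list has at least `n ≥ 1` entries in a set `I` closed under multiplication on
both sides, then its product is a product of exactly `n` elements of `I`. -/
lemma exists_prod_eq_of_le_countP (I : Set B) [DecidablePred (· ∈ I)]
    (hL : ∀ b x, x ∈ I → b * x ∈ I) (hR : ∀ x b, x ∈ I → x * b ∈ I) :
    ∀ n : ℕ, 1 ≤ n → ∀ m : List B, n ≤ m.countP (fun x => decide (x ∈ I)) →
      ∃ w : List B, w.length = n ∧ (∀ y ∈ w, y ∈ I) ∧ m.prod = w.prod := by
  intro n hn
  induction n, hn using Nat.le_induction with
  | base =>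
    intro m hm
    rcases split_first' (· ∈ I) m with hall | ⟨c, x, r, rfl, hc, hx⟩
    · exfalso
      have : m.countP (fun x => decide (x ∈ I)) = 0 :=
        List.countP_eq_zero.2 (fun a ha => by simpa using hall a ha)
      omega
    · refine ⟨[c.prod * x * r.prod], rfl, ?_, ?_⟩
      · intro y hy
        rcases List.mem_cons.1 hy with rfl | hy
        · exact hR _ _ (hL _ _ hx)
        · simp at hy
      · simp [List.prod_append, List.prod_cons, mul_assoc]
  | succ n hn ih =>
    intro m hm
    rcases split_first' (· ∈ I) m with hall | ⟨c, x, r, rfl, hc, hx⟩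
    · exfalso
      have : m.countP (fun x => decide (x ∈ I)) = 0 :=
        List.countP_eq_zero.2 (fun a ha => by simpa using hall a ha)
      omega
    · have hcc : c.countP (fun x => decide (x ∈ I)) = 0 :=
        List.countP_eq_zero.2 (fun a ha => by simpa using hc a ha)
      have hr : n ≤ r.countP (fun x => decide (x ∈ I)) := by
        rw [List.countP_append, List.countP_cons_of_pos] at hm
        · omega
        · simpa using hx
      obtain ⟨w, hwlen, hwmem, hwprod⟩ := ih r hr
      refine ⟨(c.prod * x) :: w, by simp [hwlen], ?_, ?_⟩
      · intro y hy
        rcases List.mem_cons.1 hy with rfl | hy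
        · exact hL _ _ hx
        · exact hwmem y hy
      · simp [List.prod_append, List.prod_cons, hwprod, mul_assoc]

/-- Expanding a product of sums. -/
lemma prod_mem_closure_of_forall_add (S T : Set B) :
    ∀ l : List B, (∀ x ∈ l, ∃ s ∈ S, ∃ t ∈ T, x = s + t) →
      l.prod ∈ AddSubgroup.closure
        {x | ∃ m : List B, m.length = l.length ∧ (∀ y ∈ m, y ∈ S ∪ T) ∧ x = m.prod} := by
  intro l
  induction l with
  | nil =>
    intro _
    exact AddSubgroup.subset_closure ⟨[], rfl, by simp, by simp⟩
  | cons a l ih =>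
    intro h
    obtain ⟨s, hs, t, ht, rfl⟩ := h a (List.mem_cons_self (a := a) (l := l))
    have hmul : ∀ b ∈ S ∪ T, ∀ y ∈ AddSubgroup.closure
        {x | ∃ m : List B, m.length = l.length ∧ (∀ y ∈ m, y ∈ S ∪ T) ∧ x = m.prod},
        b * y ∈ AddSubgroup.closure
          {x | ∃ m : List B, m.length = l.length + 1 ∧ (∀ y ∈ m, y ∈ S ∪ T) ∧ x = m.prod} := by
      intro b hb y hy
      induction hy using AddSubgroup.closure_induction with
      | mem z hz =>
        obtain ⟨m, hmlen, hmmem, rfl⟩ := hz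
        refine AddSubgroup.subset_closure ⟨b :: m, by simp [hmlen], ?_, by simp⟩
        intro y hy
        rcases List.mem_cons.1 hy with rfl | hy
        · exact hb
        · exact hmmem y hy
      | zero => simpa using zero_mem _
      | add u v _ _ hu hv => simpa [mul_add] using add_mem hu hv
      | neg u _ hu => simpa [mul_neg] using neg_mem hu
    have hl := ih (fun x hx => h x (List.mem_cons_of_mem _ hx))
    have h1 := hmul s (Or.inl hs) _ hl
    have h2 := hmul t (Or.inr ht) _ hl
    have : (s + t) * l.prod = s * l.prod + t * l.prod := add_mul s t l.prod
    rw [List.prod_cons, this]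
    exact add_mem h1 h2

end ring


/-- The `n`-th power of a subset `U` of a ring `B`: the additive subgroup generated by
all products `u₁ ⋯ uₙ` of `n` elements of `U`. -/
def setPow {B : Type*} [Ring B] (U : Set B) (n : ℕ) : AddSubgroup B :=
  AddSubgroup.closure {x | ∃ l : List B, l.length = n ∧ (∀ y ∈ l, y ∈ U) ∧ x = l.prod}

/-- Let `B` be a ring, `A ⊆ B` a subring, `ε : B → A` a ring homomorphism
restricting to the identity on `A`, `I = ker ε` and `J` a two-sided ideal of `A`.
Then for every `n ≥ 1`, with `N = n² + n − 1`, one has `⟨J⟩^N ⊆ ⟨Jⁿ⟩ + Iⁿ`. -/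
theorem span_pow_le_span_pow_add_ker_pow {B : Type*} [Ring B] (A : Subring B) (ε : B →+* A)
    (hε : ∀ a : A, ε (a : B) = a) (J : TwoSidedIdeal A) (n : ℕ) (hn : 1 ≤ n) :
    setPow ((TwoSidedIdeal.span ((↑) '' (J : Set A)) : TwoSidedIdeal B) : Set B)
        (n ^ 2 + n - 1) ≤
      AddSubgroup.closure
        ((TwoSidedIdeal.span ((↑) '' (setPow (J : Set A) n : Set A)) : TwoSidedIdeal B) : Set B) ⊔
        setPow {b : B | ε b = 0} n := by
  classical
  obtain ⟨k, rfl⟩ : ∃ k, n = k + 1 := ⟨n - 1, by omega⟩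
  set n := k + 1 with hkn
  set J' : Set B := (↑) '' (J : Set A) with hJ'
  set I : Set B := {b : B | ε b = 0} with hI
  set SP2 : TwoSidedIdeal B := TwoSidedIdeal.span ((↑) '' (setPow (J : Set A) n : Set A))
    with hSP2
  -- ε maps the span of J' into J
  have hεJ : ∀ x ∈ TwoSidedIdeal.span J', ε x ∈ J := by
    intro x hx
    let K : TwoSidedIdeal B := TwoSidedIdeal.mk' {b : B | ε b ∈ J}
      (by simp only [Set.mem_setOf_eq, map_zero]; exact zero_mem J)
      (fun {x y} hx hy => by
        simp only [Set.mem_setOf_eq, map_add] at *; exact add_mem hx hy)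
      (fun {x} hx => by simp only [Set.mem_setOf_eq, map_neg] at *; exact neg_mem hx)
      (fun {x y} hy => by
        simp only [Set.mem_setOf_eq, map_mul] at *; exact J.mul_mem_left _ _ hy)
      (fun {x y} hx => by
        simp only [Set.mem_setOf_eq, map_mul] at *; exact J.mul_mem_right _ _ hx)
    have hsub : J' ⊆ (K : Set B) := by
      rintro _ ⟨a, ha, rfl⟩
      show (↑a : B) ∈ K
      rw [TwoSidedIdeal.mem_mk']
      simp only [Set.mem_setOf_eq, hε]
      exact ha
    have := TwoSidedIdeal.mem_span_iff.1 hx K hsub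
    rwa [TwoSidedIdeal.mem_mk'] at this
  -- decomposition of elements of the span
  have hdec : ∀ x ∈ TwoSidedIdeal.span J', ∃ s ∈ J', ∃ t ∈ I, x = s + t := by
    intro x hx
    refine ⟨((ε x : A) : B), ⟨ε x, hεJ x hx, rfl⟩, x - ((ε x : A) : B), ?_, by abel⟩
    show ε (x - ((ε x : A) : B)) = 0
    rw [map_sub, hε]
    simp
  -- I is closed under multiplication
  have hL : ∀ b x, x ∈ I → b * x ∈ I := by
    intro b x hx
    show ε (b * x) = 0
    rw [map_mul, hx, mul_zero]
  have hR : ∀ x b, x ∈ I → x * b ∈ I := by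
    intro x b hx
    show ε (x * b) = 0
    rw [map_mul, hx, zero_mul]
  -- the key per-list claim
  have key : ∀ m : List B, m.length = n ^ 2 + n - 1 → (∀ y ∈ m, y ∈ J' ∪ I) →
      m.prod ∈ AddSubgroup.closure (SP2 : Set B) ⊔ setPow I n := by
    intro m hmlen hmmem
    by_cases hcase : n ≤ m.countP (fun x => decide (x ∈ I))
    · obtain ⟨w, hwlen, hwmem, hwprod⟩ :=
        exists_prod_eq_of_le_countP I hL hR n hn m hcase
      have : m.prod ∈ setPow I n := by
        rw [hwprod]
        exact AddSubgroup.subset_closure ⟨w, hwlen, hwmem, rfl⟩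
      exact (le_sup_right : setPow I n ≤ _) this
    · -- few elements in I: find a run of n consecutive elements of J'
      have hcount : m.countP (fun x => decide (x ∉ J')) ≤ k := by
        have h1 : m.countP (fun x => decide (x ∉ J')) ≤
            m.countP (fun x => decide (x ∈ I)) := by
          refine List.countP_mono_left ?_
          intro x hx hd
          simp only [decide_eq_true_eq] at *
          rcases hmmem x hx with h | h
          · exact absurd h hd
          · exact h
        omega
      have hmlen' : (k + 1) * n + k ≤ m.length := by
        have harith : n ^ 2 + n - 1 = (k + 1) * n + k := by
          rw [hkn, pow_two, Nat.add_succ, Nat.succ_sub_one]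
        rw [hmlen, harith]
      obtain ⟨l₁, l₂, l₃, hm, hl₂len, hl₂⟩ :=
        run_of_low_count (fun x => x ∉ J') n hn k m hmlen' hcount
      have hl₂' : ∀ y ∈ l₂, ∃ a ∈ (J : Set A), ((a : B)) = y := by
        intro y hy
        obtain ⟨a, ha, hay⟩ := not_not.1 (hl₂ y hy)
        exact ⟨a, ha, hay⟩
      obtain ⟨l₂', hl₂'mem, hl₂'map⟩ :=
        exists_preimage_list ((↑) : A → B) (J : Set A) l₂ hl₂'
      have hl₂'len : l₂'.length = n := by
        rw [← hl₂len, hl₂'map, List.length_map]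
      have hprodmem : l₂'.prod ∈ setPow (J : Set A) n :=
        AddSubgroup.subset_closure ⟨l₂', hl₂'len, hl₂'mem, rfl⟩
      have hcoe : l₂.prod = ((l₂'.prod : A) : B) := by
        rw [hl₂'map]
        induction l₂' with
        | nil => simp
        | cons a t ih => simp [List.prod_cons, ih]
      have hmem2 : l₂.prod ∈ SP2 := by
        rw [hcoe]
        exact TwoSidedIdeal.subset_span ⟨l₂'.prod, hprodmem, rfl⟩
      have : m.prod ∈ SP2 := by
        rw [hm, List.prod_append, List.prod_append]
        exact SP2.mul_mem_right _ _ (SP2.mul_mem_left _ _ hmem2)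
      exact (le_sup_left : AddSubgroup.closure (SP2 : Set B) ≤ _)
        (AddSubgroup.subset_closure this)
  -- put it together
  show AddSubgroup.closure _ ≤ _
  rw [AddSubgroup.closure_le]
  rintro x ⟨l, hlen, hmem, rfl⟩
  have hexp := prod_mem_closure_of_forall_add J' I l
    (fun x hx => hdec x (hmem x hx))
  refine (AddSubgroup.closure_le _).2 ?_ hexp
  rintro _ ⟨m, hmlen2, hmmem, rfl⟩
  exact key m (by rw [hmlen2, hlen]) hmmem
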